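/- Let μ be a Radon measure on ℝ, c ∈ ℝ, κ ∈ ℝ, and let g be a continuous locally bounded function satisfying g(x) = g(c) + κ(x − c) + ∫ (x ∨ y − c ∨ y) g(y) dμ(y) for all x. Then g has one-sided derivatives everywhere, with right derivative g'₊(x) = κ + ∫_{(−∞, x]} g(y) dμ(y) and left derivative g'₋(x) = κ + ∫_{(−∞, x)} g(y) dμ(y). In particular, g is differentiable at every x with μ({x}) = 0 or g(x) = 0. -/

import Mathlib

open MeasureTheory Set Filter Topology

/-- one-sided derivatives of solutions of the integral equation. -/
theorem stmt4 (μ : Measure ℝ) [IsLocallyFiniteMeasure μ]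
    (c κ : ℝ) (g : ℝ → ℝ) (hg : Continuous g)
    (hloc : ∀ r : ℝ, ∃ C : ℝ, ∀ x : ℝ, |x| ≤ r → |g x| ≤ C)
    (hint : ∀ x : ℝ, Integrable (fun y => (max x y - max c y) * g y) μ)
    (heq : ∀ x : ℝ, g x = g c + κ * (x - c) + ∫ y, (max x y - max c y) * g y ∂μ) :
    (∀ x : ℝ, HasDerivWithinAt g (κ + ∫ y in Iic x, g y ∂μ) (Ici x) x) ∧
    (∀ x : ℝ, HasDerivWithinAt g (κ + ∫ y in Iio x, g y ∂μ) (Iic x) x) ∧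
    (∀ x : ℝ, (μ {x} = 0 ∨ g x = 0) → DifferentiableAt ℝ g x) := by
  -- integrability of g on every Iic a
  have hIic : ∀ a : ℝ, IntegrableOn g (Iic a) μ := by
    intro a
    have h1 : IntegrableOn g (Iic c) μ := by
      have h := (hint (c + 1)).integrableOn (s := Iic c)
      refine h.congr_fun ?_ measurableSet_Iic
      intro y hy
      simp only [mem_Iic] at hy
      show ((c + 1) ⊔ y - c ⊔ y) * g y = g y
      rw [sup_eq_left.mpr (by linarith : y ≤ c + 1), sup_eq_left.mpr hy]
      ring
    have h2 : IntegrableOn g (Icc c a) μ := hg.integrableOn_Icc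
    refine (h1.union h2).mono_set fun y hy => ?_
    rcases le_or_gt y c with h | h
    · exact Or.inl h
    · exact Or.inr ⟨h.le, hy⟩
  -- difference formula
  have hdiff : ∀ x x' : ℝ, g x' - g x = κ * (x' - x) + ∫ y, (max x' y - max x y) * g y ∂μ := by
    intro x x'
    have hsub : ∫ y, (max x' y - max x y) * g y ∂μ
        = (∫ y, (max x' y - max c y) * g y ∂μ) - ∫ y, (max x y - max c y) * g y ∂μ := by
      rw [← integral_sub (hint x') (hint x)]
      congr 1; funext y; ring
    have h1 := heq x'
    have h2 := heq x
    rw [hsub]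
    linarith
  -- decomposition of the integral for x < x'
  have hdec : ∀ x x' : ℝ, x < x' →
      (∫ y, (max x' y - max x y) * g y ∂μ)
        = (x' - x) * (∫ y in Iic x, g y ∂μ) + ∫ y in Ioc x x', (x' - y) * g y ∂μ := by
    intro x x' hxx'
    set f : ℝ → ℝ := fun y => (max x' y - max x y) * g y with hf
    have hz : ∀ y, y ∉ Iic x' → f y = 0 := by
      intro y hy
      simp only [mem_Iic, not_le] at hy
      show (x' ⊔ y - x ⊔ y) * g y = 0
      rw [sup_eq_right.mpr hy.le, sup_eq_right.mpr (by linarith : x ≤ y)]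
      ring
    have hfIic : IntegrableOn f (Iic x) μ := by
      refine IntegrableOn.congr_fun (f := fun y => (x' - x) * g y)
        ((hIic x).const_mul (x' - x)) (fun y hy => ?_) measurableSet_Iic
      simp only [mem_Iic] at hy
      show (x' - x) * g y = (x' ⊔ y - x ⊔ y) * g y
      rw [sup_eq_left.mpr (by linarith : y ≤ x'), sup_eq_left.mpr hy]
    have hIocInt : IntegrableOn (fun y => (x' - y) * g y) (Ioc x x') μ :=
      (((continuous_const.sub continuous_id).mul hg).integrableOn_Icc).mono_set
        Ioc_subset_Icc_self
    have hfIoc : IntegrableOn f (Ioc x x') μ := by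
      refine hIocInt.congr_fun (fun y hy => ?_) measurableSet_Ioc
      simp only [mem_Ioc] at hy
      show (x' - y) * g y = (x' ⊔ y - x ⊔ y) * g y
      rw [sup_eq_left.mpr hy.2, sup_eq_right.mpr hy.1.le]
    calc ∫ y, f y ∂μ = ∫ y in Iic x', f y ∂μ :=
          (setIntegral_eq_integral_of_forall_compl_eq_zero hz).symm
      _ = (∫ y in Iic x, f y ∂μ) + ∫ y in Ioc x x', f y ∂μ := by
          rw [← Iic_union_Ioc_eq_Iic hxx'.le,
            setIntegral_union (Iic_disjoint_Ioc le_rfl) measurableSet_Ioc hfIic hfIoc]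
      _ = (x' - x) * (∫ y in Iic x, g y ∂μ) + ∫ y in Ioc x x', (x' - y) * g y ∂μ := by
          congr 1
          · rw [setIntegral_congr_fun measurableSet_Iic
              (show EqOn f (fun y => (x' - x) * g y) (Iic x) from fun y hy => by
                simp only [mem_Iic] at hy
                show (x' ⊔ y - x ⊔ y) * g y = (x' - x) * g y
                rw [sup_eq_left.mpr (by linarith : y ≤ x'), sup_eq_left.mpr hy]),
              integral_const_mul]
          · refine setIntegral_congr_fun measurableSet_Ioc fun y hy => ?_
            simp only [mem_Ioc] at hy
            show (x' ⊔ y - x ⊔ y) * g y = (x' - y) * g y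
            rw [sup_eq_left.mpr hy.2, sup_eq_right.mpr hy.1.le]
  -- slope formula for x < x'
  have hslope : ∀ x x' : ℝ, x < x' →
      slope g x x' = κ + (∫ y in Iic x, g y ∂μ)
        + (x' - x)⁻¹ * ∫ y in Ioc x x', (x' - y) * g y ∂μ := by
    intro x x' h
    rw [slope_def_field, hdiff x x', hdec x x' h]
    have hne : x' - x ≠ 0 := by linarith
    field_simp
    ring
  -- measure tendsto from the right
  have hmeas_r : ∀ x : ℝ, Tendsto (fun x' => (μ (Ioc x x')).toReal) (𝓝[>] x) (𝓝 0) := by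
    intro x
    have h1 : Tendsto (fun x' => μ (Ioc x x')) (𝓝[>] x) (𝓝 (μ (⋂ r > x, Ioc x r))) :=
      tendsto_measure_biInter_gt (fun r _ => measurableSet_Ioc.nullMeasurableSet)
        (fun i j _ hij => Ioc_subset_Ioc_right hij)
        ⟨x + 1, lt_add_one x, measure_Ioc_lt_top.ne⟩
    have hempty : (⋂ r > x, Ioc x r) = (∅ : Set ℝ) := by
      ext y
      simp only [mem_iInter, mem_Ioc, mem_empty_iff_false, iff_false]
      intro h
      have h1 := h (x + 1) (lt_add_one x)
      have h2 := (h ((x + y) / 2) (by linarith [h1.1])).2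
      linarith [h1.1]
    rw [hempty, measure_empty] at h1
    have h2 := (ENNReal.tendsto_toReal (by simp)).comp h1
    simpa [Function.comp_def] using h2
  -- measure tendsto from the left
  have hmeas_l : ∀ x : ℝ, Tendsto (fun x' => (μ (Ioo x' x)).toReal) (𝓝[<] x) (𝓝 0) := by
    intro x
    have h1 : Tendsto (fun t => μ (Ioo (2 * x - t) x)) (𝓝[>] x)
        (𝓝 (μ (⋂ r > x, Ioo (2 * x - r) x))) :=
      tendsto_measure_biInter_gt (fun r _ => measurableSet_Ioo.nullMeasurableSet)
        (fun i j _ hij => Ioo_subset_Ioo_left (by linarith))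
        ⟨x + 1, lt_add_one x, measure_Ioo_lt_top.ne⟩
    have hempty : (⋂ r > x, Ioo (2 * x - r) x) = (∅ : Set ℝ) := by
      ext y
      simp only [mem_iInter, mem_Ioo, mem_empty_iff_false, iff_false]
      intro h
      have h1 := h (x + 1) (lt_add_one x)
      have h2 := (h (x + (x - y)) (by linarith [h1.2])).1
      linarith
    rw [hempty, measure_empty] at h1
    have h2 : Tendsto (fun x' : ℝ => 2 * x - x') (𝓝[<] x) (𝓝[>] x) := by
      apply tendsto_nhdsWithin_of_tendsto_nhds_of_eventually_within
      · have h0 : Tendsto (fun x' : ℝ => 2 * x - x') (𝓝 x) (𝓝 (2 * x - x)) :=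
          (continuous_const.sub continuous_id).tendsto x
        rw [show 2 * x - x = x by ring] at h0
        exact h0.mono_left nhdsWithin_le_nhds
      · filter_upwards [self_mem_nhdsWithin] with x' hx'
        simp only [mem_Iio] at hx'
        simp only [mem_Ioi]
        linarith
    have h3 := h1.comp h2
    have h4 := (ENNReal.tendsto_toReal (by simp)).comp h3
    have h5 : (fun x' : ℝ => (μ (Ioo x' x)).toReal)
        = (ENNReal.toReal ∘ (fun t => μ (Ioo (2 * x - t) x)) ∘ fun x' : ℝ => 2 * x - x') := by
      funext x'
      simp only [Function.comp_apply]
      congr 2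
      ring_nf
    rw [h5]
    simpa using h4
  -- right derivative
  have hR : ∀ x : ℝ, HasDerivWithinAt g (κ + ∫ y in Iic x, g y ∂μ) (Ici x) x := by
    intro x
    rw [hasDerivWithinAt_iff_tendsto_slope, Ici_sdiff_left]
    obtain ⟨C, hC⟩ := hloc (|x| + 1)
    have hC0 : 0 ≤ C := (abs_nonneg (g x)).trans (hC x (by linarith [abs_nonneg x]))
    rw [tendsto_iff_norm_sub_tendsto_zero]
    refine squeeze_zero' (g := fun x' => C * (μ (Ioc x x')).toReal)
      (Eventually.of_forall fun _ => norm_nonneg _) ?_ ?_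
    · filter_upwards [Ioo_mem_nhdsGT (lt_add_one x)] with x' hx'
      obtain ⟨hx1, hx2⟩ := hx'
      rw [hslope x x' hx1]
      have hre : κ + (∫ y in Iic x, g y ∂μ)
          + (x' - x)⁻¹ * (∫ y in Ioc x x', (x' - y) * g y ∂μ)
          - (κ + ∫ y in Iic x, g y ∂μ)
          = (x' - x)⁻¹ * ∫ y in Ioc x x', (x' - y) * g y ∂μ := by ring
      rw [hre]
      have hb : ‖∫ y in Ioc x x', (x' - y) * g y ∂μ‖
          ≤ ((x' - x) * C) * (μ (Ioc x x')).toReal := by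
        apply norm_setIntegral_le_of_norm_le_const measure_Ioc_lt_top
        intro y hy
        rw [Real.norm_eq_abs, abs_mul]
        have h1 : |x' - y| ≤ x' - x := by
          rw [abs_of_nonneg (by linarith [hy.2])]
          linarith [hy.1]
        have h2 : |g y| ≤ C := hC y (abs_le.mpr
          ⟨by linarith [neg_abs_le x, hy.1], by linarith [le_abs_self x, hy.2]⟩)
        exact mul_le_mul h1 h2 (abs_nonneg _) (by linarith)
      rw [norm_mul, Real.norm_eq_abs, abs_of_pos (inv_pos.mpr (by linarith))]
      calc (x' - x)⁻¹ * ‖∫ y in Ioc x x', (x' - y) * g y ∂μ‖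
          ≤ (x' - x)⁻¹ * (((x' - x) * C) * (μ (Ioc x x')).toReal) :=
            mul_le_mul_of_nonneg_left hb (inv_nonneg.mpr (by linarith))
        _ = ((x' - x)⁻¹ * (x' - x)) * (C * (μ (Ioc x x')).toReal) := by ring
        _ = C * (μ (Ioc x x')).toReal := by
            rw [inv_mul_cancel₀ (by linarith : x' - x ≠ 0), one_mul]
    · have := (hmeas_r x).const_mul C
      simpa using this
  -- left derivative
  have hL : ∀ x : ℝ, HasDerivWithinAt g (κ + ∫ y in Iio x, g y ∂μ) (Iic x) x := by
    intro x
    rw [hasDerivWithinAt_iff_tendsto_slope, Iic_diff_right]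
    obtain ⟨C, hC⟩ := hloc (|x| + 1)
    have hC0 : 0 ≤ C := (abs_nonneg (g x)).trans (hC x (by linarith [abs_nonneg x]))
    rw [tendsto_iff_norm_sub_tendsto_zero]
    refine squeeze_zero' (g := fun x' => C * (μ (Ioo x' x)).toReal)
      (Eventually.of_forall fun _ => norm_nonneg _) ?_ ?_
    · filter_upwards [Ioo_mem_nhdsLT (by linarith : x - 1 < x)] with x' hx'
      obtain ⟨hx1, hx2⟩ := hx'
      -- slope g x x' = slope g x' x, use hslope with (x', x)
      rw [slope_comm, hslope x' x hx2]
      -- rewrite Iic x' integral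
      have hInt_Ioo_g : IntegrableOn g (Ioo x' x) μ :=
        (hIic x).mono_set fun y hy => le_of_lt hy.2
      have hInt_Ioo_f : IntegrableOn (fun y => (x - y) * g y) (Ioo x' x) μ :=
        (((continuous_const.sub continuous_id).mul hg).integrableOn_Icc).mono_set
          (Ioo_subset_Icc_self (a := x') (b := x))
      have e1 : (∫ y in Iic x', g y ∂μ)
          = (∫ y in Iio x, g y ∂μ) - ∫ y in Ioo x' x, g y ∂μ := by
        have : (∫ y in Iio x, g y ∂μ)
            = (∫ y in Iic x', g y ∂μ) + ∫ y in Ioo x' x, g y ∂μ := by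
          rw [← Iic_union_Ioo_eq_Iio hx2,
            setIntegral_union (by
              refine disjoint_left.mpr fun y hy hy2 => ?_
              simp only [mem_Iic] at hy
              exact absurd hy2.1 (not_lt.mpr hy)) measurableSet_Ioo
              ((hIic x').mono_set Subset.rfl) hInt_Ioo_g]
        linarith
      have e2 : (∫ y in Ioc x' x, (x - y) * g y ∂μ)
          = ∫ y in Ioo x' x, (x - y) * g y ∂μ := by
        rw [← Ioo_union_right hx2,
          setIntegral_union (disjoint_singleton_right.mpr (by simp))
            (measurableSet_singleton x) hInt_Ioo_f
            ((((continuous_const.sub continuous_id).mul hg).integrableOn_Icc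
              (a := x') (b := x)).mono_set (by
                intro y hy
                simp only [mem_singleton_iff] at hy
                subst hy
                exact ⟨hx2.le, le_rfl⟩))]
        have hz : (∫ y in ({x} : Set ℝ), (x - y) * g y ∂μ)
            = ∫ y in ({x} : Set ℝ), (0 : ℝ) ∂μ := by
          refine setIntegral_congr_fun (measurableSet_singleton x) fun y hy => ?_
          simp only [mem_singleton_iff] at hy
          subst hy
          ring
        rw [hz]
        simp
      rw [e1, e2]
      have hInt_Ioo_f' : IntegrableOn (fun y => (x' - y) * g y) (Ioo x' x) μ :=
        (((continuous_const.sub continuous_id).mul hg).integrableOn_Icc).mono_set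
          (Ioo_subset_Icc_self (a := x') (b := x))
      have e3 : (∫ y in Ioo x' x, (x - y) * g y ∂μ)
          = (∫ y in Ioo x' x, (x' - y) * g y ∂μ) + (x - x') * ∫ y in Ioo x' x, g y ∂μ := by
        rw [← integral_const_mul, ← integral_add hInt_Ioo_f' (hInt_Ioo_g.const_mul (x - x'))]
        refine setIntegral_congr_fun measurableSet_Ioo fun y hy => ?_
        ring
      rw [e3]
      have hne : (0:ℝ) < x - x' := by linarith
      have hre : κ + ((∫ y in Iio x, g y ∂μ) - ∫ y in Ioo x' x, g y ∂μ)
          + (x - x')⁻¹ * ((∫ y in Ioo x' x, (x' - y) * g y ∂μ)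
            + (x - x') * ∫ y in Ioo x' x, g y ∂μ)
          - (κ + ∫ y in Iio x, g y ∂μ)
          = (x - x')⁻¹ * ∫ y in Ioo x' x, (x' - y) * g y ∂μ := by
        field_simp
        ring
      rw [hre]
      have hb : ‖∫ y in Ioo x' x, (x' - y) * g y ∂μ‖
          ≤ ((x - x') * C) * (μ (Ioo x' x)).toReal := by
        apply norm_setIntegral_le_of_norm_le_const measure_Ioo_lt_top
        intro y hy
        rw [Real.norm_eq_abs, abs_mul]
        have h1 : |x' - y| ≤ x - x' := by
          rw [abs_of_nonpos (by linarith [hy.1])]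
          linarith [hy.2]
        have h2 : |g y| ≤ C := hC y (abs_le.mpr
          ⟨by linarith [neg_abs_le x, hy.1], by linarith [le_abs_self x, hy.2]⟩)
        exact mul_le_mul h1 h2 (abs_nonneg _) (by linarith)
      rw [norm_mul, Real.norm_eq_abs, abs_of_pos (inv_pos.mpr hne)]
      calc (x - x')⁻¹ * ‖∫ y in Ioo x' x, (x' - y) * g y ∂μ‖
          ≤ (x - x')⁻¹ * (((x - x') * C) * (μ (Ioo x' x)).toReal) :=
            mul_le_mul_of_nonneg_left hb (inv_nonneg.mpr (by linarith))
        _ = ((x - x')⁻¹ * (x - x')) * (C * (μ (Ioo x' x)).toReal) := by ring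
        _ = C * (μ (Ioo x' x)).toReal := by
            rw [inv_mul_cancel₀ (by linarith : x - x' ≠ 0), one_mul]
    · have := (hmeas_l x).const_mul C
      simpa using this
  refine ⟨hR, hL, ?_⟩
  intro x hx
  have heq2 : (∫ y in Iic x, g y ∂μ) = ∫ y in Iio x, g y ∂μ := by
    have hu : Iio x ∪ {x} = Iic x := Iio_union_right
    have hsing : (∫ y in ({x} : Set ℝ), g y ∂μ) = 0 := by
      rcases hx with h | h
      · rw [Measure.restrict_eq_zero.mpr (by simpa using h)]
        simp
      · have : (∫ y in ({x} : Set ℝ), g y ∂μ) = ∫ y in ({x} : Set ℝ), (0 : ℝ) ∂μ := by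
          refine setIntegral_congr_fun (measurableSet_singleton x) fun y hy => ?_
          simp only [mem_singleton_iff] at hy
          rw [hy, h]
        rw [this]
        simp
    have hsum := setIntegral_union (μ := μ) (f := g)
      (disjoint_singleton_right.mpr (by simp))
      (measurableSet_singleton x) ((hIic x).mono_set Iio_subset_Iic_self)
      ((hIic x).mono_set (singleton_subset_iff.mpr self_mem_Iic))
    rw [hu] at hsum
    rw [hsum, hsing, add_zero]
  have hL' := hL x
  rw [← heq2] at hL'
  have hu : HasDerivWithinAt g (κ + ∫ y in Iic x, g y ∂μ) (Ici x ∪ Iic x) x :=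
    (hR x).union hL'
  rw [union_comm, Iic_union_Ici, hasDerivWithinAt_univ] at hu
  exact hu.differentiableAt
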